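/- arXiv:2403.11744 — 2 statements merged into one kernel-verified Lean document; each statement's English description precedes it below -/
import Mathlib

section
/- Let N ≥ 3 and let P be any symmetric irreducible row-stochastic N×N matrix with mean first passage time matrix M. Then Σ_{i≠j} M_{ij} ≥ N³ − 2N² + N; that is, the total sum of mean first passage times of any reversible (symmetric) Markov chain on N states is at least N(N−1)². -/
open Matrix Finset

/-- An N×N real matrix is row-stochastic: nonnegative entries, each row sums to 1. -/
def IsRowStochastic {N : ℕ} (P : Matrix (Fin N) (Fin N) ℝ) : Prop :=
  (∀ i j, 0 ≤ P i j) ∧ ∀ i, ∑ j, P i j = 1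

/-- Irreducibility: for all i, j there is k ≥ 1 with (P^k)_{ij} > 0. -/
def IsIrreducibleMC {N : ℕ} (P : Matrix (Fin N) (Fin N) ℝ) : Prop :=
  ∀ i j, ∃ k : ℕ, 1 ≤ k ∧ 0 < (P ^ k) i j

/-- M is a mean first passage time matrix of P. -/
def IsMFPT {N : ℕ} (P M : Matrix (Fin N) (Fin N) ℝ) : Prop :=
  ∀ i j, M i j = 1 + ∑ k ∈ Finset.univ.filter (fun k => k ≠ j), P i k * M k j

variable {N : ℕ} (P : Matrix (Fin N) (Fin N) ℝ)

/-- entries of powers of a nonneg matrix are nonneg -/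
lemma pow_entry_nonneg (hP : ∀ i j, 0 ≤ P i j) : ∀ k i j, 0 ≤ (P ^ k) i j := by
  intro k
  induction k with
  | zero => intro i j; by_cases h : i = j <;> simp [h, Matrix.one_apply]
  | succ k ih =>
    intro i j
    rw [pow_succ, Matrix.mul_apply]
    exact Finset.sum_nonneg fun l _ => mul_nonneg (ih i l) (hP l j)

lemma const_on_reachable (hP : ∀ i j, 0 ≤ P i j) (x : Fin N → ℝ)
    (h : ∀ i j, 0 < P i j → x i = x j) :
    ∀ k i j, 0 < (P ^ k) i j → x i = x j := by
  intro k
  induction k with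
  | zero =>
    intro i j hij
    by_cases h' : i = j
    · rw [h']
    · simp [Matrix.one_apply, h'] at hij
  | succ k ih =>
    intro i j hij
    rw [pow_succ, Matrix.mul_apply] at hij
    obtain ⟨l, -, hl⟩ := Finset.exists_ne_zero_of_sum_ne_zero hij.ne'
    have h1 : 0 < (P ^ k) i l := lt_of_le_of_ne (pow_entry_nonneg P hP k i l)
      (fun h0 => hl (by rw [← h0]; ring))
    have h2 : 0 < P l j := lt_of_le_of_ne (hP l j)
      (fun h0 => hl (by rw [← h0]; ring))
    exact (ih i l h1).trans (h l j h2)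


variable {N : ℕ} (P : Matrix (Fin N) (Fin N) ℝ)

noncomputable def Jmat (N : ℕ) : Matrix (Fin N) (Fin N) ℝ := Matrix.of fun _ _ => (1:ℝ)

noncomputable def Amat (P : Matrix (Fin N) (Fin N) ℝ) : Matrix (Fin N) (Fin N) ℝ :=
  1 - P + (N:ℝ)⁻¹ • Jmat N

lemma quadform (hrow : ∀ i, ∑ j, P i j = 1) (hcol : ∀ j, ∑ i, P i j = 1) (x : Fin N → ℝ) :
    x ⬝ᵥ (Amat P *ᵥ x) =
      (∑ i, ∑ j, P i j * (x i - x j)^2)/2 + (N:ℝ)⁻¹ * (∑ i, x i)^2 := by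
  have key : ∑ i, ∑ j, P i j * (x i - x j)^2
      = 2*(∑ i, x i ^2) - 2*(∑ i, ∑ j, P i j * (x i * x j)) := by
    have h1 : ∀ i j, P i j * (x i - x j)^2
        = P i j * x i^2 + P i j * x j^2 - 2*(P i j * (x i * x j)) := by intros; ring
    simp_rw [h1, Finset.sum_sub_distrib, Finset.sum_add_distrib]
    have h2 : ∑ i, ∑ j, P i j * x i ^ 2 = ∑ i, x i ^ 2 := by
      simp_rw [← Finset.sum_mul]
      exact Finset.sum_congr rfl fun i _ => by rw [hrow i, one_mul]
    have h3 : ∑ i, ∑ j, P i j * x j ^ 2 = ∑ i, x i ^ 2 := by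
      rw [Finset.sum_comm]
      simp_rw [← Finset.sum_mul]
      exact Finset.sum_congr rfl fun j _ => by rw [hcol j, one_mul]
    rw [h2, h3]
    have h4 : ∑ i, ∑ j, 2 * (P i j * (x i * x j)) = 2 * ∑ i, ∑ j, P i j * (x i * x j) := by
      rw [Finset.mul_sum]
      exact Finset.sum_congr rfl fun i _ => (Finset.mul_sum _ _ _).symm
    rw [h4]; ring
  have lhs : x ⬝ᵥ (Amat P *ᵥ x) =
      (∑ i, x i ^2) - (∑ i, ∑ j, P i j * (x i * x j)) + (N:ℝ)⁻¹ * (∑ i, x i)^2 := by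
    simp only [Amat, Jmat, dotProduct, mulVec, Matrix.add_apply, Matrix.sub_apply,
      Matrix.smul_apply, Matrix.of_apply, Matrix.one_apply, smul_eq_mul, mul_one]
    have : ∀ i, (∑ j, ((if i = j then (1:ℝ) else 0) - P i j + (N:ℝ)⁻¹) * x j)
        = x i - (∑ j, P i j * x j) + (N:ℝ)⁻¹ * ∑ j, x j := by
      intro i
      have : ∀ j, ((if i = j then (1:ℝ) else 0) - P i j + (N:ℝ)⁻¹) * x j
          = (if i = j then x j else 0) - P i j * x j + (N:ℝ)⁻¹ * x j := by
        intro j; by_cases h : i = j <;> simp [h] <;> ring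
      simp_rw [this, Finset.sum_add_distrib, Finset.sum_sub_distrib, Finset.sum_ite_eq,
        Finset.mem_univ, if_pos, ← Finset.mul_sum]
    simp_rw [this]
    have expand : ∀ i, x i * (x i - (∑ j, P i j * x j) + (N:ℝ)⁻¹ * ∑ j, x j)
        = x i ^ 2 - (∑ j, P i j * (x i * x j)) + (N:ℝ)⁻¹ * (x i * ∑ j, x j) := by
      intro i
      have : x i * ∑ j, P i j * x j = ∑ j, P i j * (x i * x j) := by
        rw [Finset.mul_sum]; exact Finset.sum_congr rfl fun j _ => by ring
      rw [← this]; ring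
    simp_rw [expand, Finset.sum_add_distrib, Finset.sum_sub_distrib, ← Finset.mul_sum,
      ← Finset.sum_mul]
    ring
  rw [lhs, key]; ring

lemma Amat_isHermitian (hsym : P = Pᵀ) : (Amat P).IsHermitian := by
  show (Amat P)ᴴ = Amat P
  ext i j
  have hPsym : P j i = P i j := by conv_lhs => rw [hsym, Matrix.transpose_apply]
  simp [Amat, Jmat, Matrix.conjTranspose_apply, Matrix.one_apply, Matrix.add_apply,
    Matrix.sub_apply, Matrix.smul_apply, hPsym, eq_comm]

lemma Amat_posDef (hN : 0 < N) (hP0 : ∀ i j, 0 ≤ P i j) (hrow : ∀ i, ∑ j, P i j = 1)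
    (hcol : ∀ j, ∑ i, P i j = 1) (hsym : P = Pᵀ)
    (hirr : ∀ i j, ∃ k : ℕ, 1 ≤ k ∧ 0 < (P ^ k) i j) :
    (Amat P).PosDef := by
  refine Matrix.PosDef.of_dotProduct_mulVec_pos (Amat_isHermitian P hsym) fun x hx => ?_
  rw [show star x = x from star_trivial x, quadform P hrow hcol x]
  set E := ∑ i, ∑ j, P i j * (x i - x j)^2 with hE
  have hEnn : 0 ≤ E := Finset.sum_nonneg fun i _ => Finset.sum_nonneg fun j _ =>
    mul_nonneg (hP0 i j) (sq_nonneg _)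
  have hTnn : 0 ≤ (N:ℝ)⁻¹ * (∑ i, x i)^2 := by positivity
  by_contra hcon
  push_neg at hcon
  have hE0 : E = 0 := le_antisymm (by linarith) hEnn
  have hT0 : (∑ i, x i) = 0 := by
    have h1 : (N:ℝ)⁻¹ * (∑ i, x i)^2 = 0 := le_antisymm (by linarith) hTnn
    have hNne : (N:ℝ)⁻¹ ≠ 0 := by positivity
    have := (mul_eq_zero.1 h1).resolve_left hNne
    exact pow_eq_zero_iff (n := 2) (by norm_num) |>.1 this
  have hterm : ∀ i j, P i j * (x i - x j)^2 = 0 := by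
    intro i j
    have h1 := (Finset.sum_eq_zero_iff_of_nonneg (fun i _ => Finset.sum_nonneg fun j _ =>
      mul_nonneg (hP0 i j) (sq_nonneg _))).1 hE0 i (Finset.mem_univ i)
    exact (Finset.sum_eq_zero_iff_of_nonneg (fun j _ =>
      mul_nonneg (hP0 i j) (sq_nonneg _))).1 h1 j (Finset.mem_univ j)
  have heq : ∀ i j, 0 < P i j → x i = x j := by
    intro i j hij
    have := (mul_eq_zero.1 (hterm i j)).resolve_left hij.ne'
    have := pow_eq_zero_iff (n := 2) (by norm_num) |>.1 this
    linarith [sub_eq_zero.1 this]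
  have hconst : ∀ i j, x i = x j := by
    intro i j
    obtain ⟨k, -, hk⟩ := hirr i j
    exact const_on_reachable P hP0 x heq k i j hk
  apply hx
  funext i
  have hsum : ∑ j, x j = (N:ℝ) * x i := by
    rw [Finset.sum_congr rfl fun j _ => hconst j i]
    simp [Finset.card_univ]
  have : (N:ℝ) * x i = 0 := by rw [← hsum, hT0]
  have hNne : (N:ℝ) ≠ 0 := Nat.cast_ne_zero.2 hN.ne'
  exact (mul_eq_zero.1 this).resolve_left hNne

section main
variable {N : ℕ} (P M : Matrix (Fin N) (Fin N) ℝ)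

lemma Mdiag (hcol : ∀ j, ∑ i, P i j = 1)
    (hM : ∀ i j, M i j = 1 + ∑ k ∈ Finset.univ.filter (fun k => k ≠ j), P i k * M k j)
    (j : Fin N) : M j j = N := by
  have hsum : ∑ i, M i j = N + ∑ k ∈ univ.erase j, M k j := by
    calc ∑ i, M i j = ∑ i : Fin N, (1 + ∑ k ∈ univ.erase j, P i k * M k j) := by
          refine Finset.sum_congr rfl fun i _ => ?_
          rw [hM i j, Finset.filter_ne']
      _ = N + ∑ i : Fin N, ∑ k ∈ univ.erase j, P i k * M k j := by
          rw [Finset.sum_add_distrib]; simp [Finset.card_univ]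
      _ = N + ∑ k ∈ univ.erase j, (∑ i, P i k) * M k j := by
          rw [Finset.sum_comm]
          simp_rw [← Finset.sum_mul]
      _ = N + ∑ k ∈ univ.erase j, M k j := by
          congr 1
          exact Finset.sum_congr rfl fun k _ => by rw [hcol k, one_mul]
  have h2 : M j j + ∑ k ∈ univ.erase j, M k j = ∑ i, M i j :=
    Finset.add_sum_erase univ (fun k => M k j) (Finset.mem_univ j)
  linarith [h2.trans hsum]

lemma Meq (hcol : ∀ j, ∑ i, P i j = 1)
    (hM : ∀ i j, M i j = 1 + ∑ k ∈ Finset.univ.filter (fun k => k ≠ j), P i k * M k j) :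
    M = Jmat N + P * M - (N:ℝ) • P := by
  ext i j
  have hkey : ∑ k ∈ univ.erase j, P i k * M k j = (∑ k, P i k * M k j) - P i j * M j j :=
    Finset.sum_erase_eq_sub (Finset.mem_univ j)
  rw [Matrix.sub_apply, Matrix.add_apply, Matrix.smul_apply, Matrix.mul_apply, hM i j,
    Finset.filter_ne', hkey, Mdiag P M hcol hM j]
  simp [Jmat]
  ring
end main

section main2
variable {N : ℕ} (P M : Matrix (Fin N) (Fin N) ℝ)

lemma total_sum_eq (hN : 0 < N) (hrow : ∀ i, ∑ j, P i j = 1) (hcol : ∀ j, ∑ i, P i j = 1)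
    (hdet : IsUnit (Amat P).det)
    (hM : ∀ i j, M i j = 1 + ∑ k ∈ Finset.univ.filter (fun k => k ≠ j), P i k * M k j) :
    ∑ i, ∑ j, M i j = (N:ℝ)^2 * ((Amat P)⁻¹).trace := by
  set A := Amat P with hA
  set Z := A⁻¹ with hZ
  have hNR : (N:ℝ) ≠ 0 := Nat.cast_ne_zero.2 hN.ne'
  have hAZ : A * Z = 1 := Matrix.mul_nonsing_inv _ hdet
  have hZA : Z * A = 1 := Matrix.nonsing_inv_mul _ hdet
  have hAJ : A * Jmat N = Jmat N := by
    ext i j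
    simp only [Matrix.mul_apply, hA, Amat, Jmat, Matrix.add_apply, Matrix.sub_apply,
      Matrix.smul_apply, Matrix.one_apply, Matrix.of_apply, smul_eq_mul, mul_one]
    rw [Finset.sum_add_distrib, Finset.sum_sub_distrib]
    simp [hrow i, Finset.card_univ, mul_comm, hNR]
  have hZJ : Z * Jmat N = Jmat N := by
    calc Z * Jmat N = Z * (A * Jmat N) := by rw [hAJ]
      _ = (Z * A) * Jmat N := by rw [Matrix.mul_assoc]
      _ = Jmat N := by rw [hZA, Matrix.one_mul]
  have hMe : M = Jmat N + P * M - (N:ℝ) • P := Meq P M hcol hM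
  have hAM : A * M = Jmat N - (N:ℝ) • P + (N:ℝ)⁻¹ • (Jmat N * M) := by
    calc A * M = M - P * M + (N:ℝ)⁻¹ • (Jmat N * M) := by
          rw [hA, Amat, Matrix.add_mul, Matrix.sub_mul, Matrix.one_mul, Matrix.smul_mul]
      _ = _ := by nth_rewrite 1 [hMe]; abel
  have hMform : M = Z * Jmat N - (N:ℝ) • (Z * P) + (N:ℝ)⁻¹ • (Jmat N * M) := by
    calc M = (Z * A) * M := by rw [hZA, Matrix.one_mul]
      _ = Z * (A * M) := by rw [Matrix.mul_assoc]
      _ = Z * (Jmat N - (N:ℝ) • P + (N:ℝ)⁻¹ • (Jmat N * M)) := by rw [hAM]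
      _ = Z * Jmat N - (N:ℝ) • (Z * P) + (N:ℝ)⁻¹ • ((Z * Jmat N) * M) := by
          rw [Matrix.mul_add, Matrix.mul_sub, Matrix.mul_smul, Matrix.mul_smul,
            Matrix.mul_assoc]
      _ = _ := by rw [hZJ]
  have hdiag : ∀ j, M j j = N := Mdiag P M hcol hM
  have htrM : M.trace = (N:ℝ) * N := by
    rw [Matrix.trace]
    simp only [Matrix.diag_apply]
    rw [Finset.sum_congr rfl fun j _ => hdiag j]
    simp [Finset.card_univ]
  have htrJ : (Jmat N).trace = (N:ℝ) := by
    rw [Matrix.trace]; simp [Jmat, Finset.card_univ]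
  have htrZP : (Z * P).trace = Z.trace - N + 1 := by
    have hPA : P = 1 - A + (N:ℝ)⁻¹ • Jmat N := by rw [hA, Amat]; abel
    calc (Z * P).trace = (Z * (1 - A + (N:ℝ)⁻¹ • Jmat N)).trace := by rw [← hPA]
      _ = (Z - Z * A + (N:ℝ)⁻¹ • (Z * Jmat N)).trace := by
          rw [Matrix.mul_add, Matrix.mul_sub, Matrix.mul_one, Matrix.mul_smul]
      _ = Z.trace - (N:ℝ) + 1 := by
          rw [hZA, hZJ, Matrix.trace_add, Matrix.trace_sub, Matrix.trace_smul, htrJ,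
            Matrix.trace_one]
          simp [hNR]
  have htrJM : (Jmat N * M).trace = ∑ i, ∑ j, M i j := by
    rw [Matrix.trace]
    simp only [Matrix.diag_apply, Matrix.mul_apply, Jmat, Matrix.of_apply, one_mul]
    rw [Finset.sum_comm]
  have := congrArg Matrix.trace hMform
  rw [Matrix.trace_add, Matrix.trace_sub, Matrix.trace_smul, Matrix.trace_smul, hZJ, htrJ,
    htrZP, htrJM, htrM] at this
  simp only [smul_eq_mul] at this
  field_simp at this ⊢
  nlinarith [this]
end main2

section spectral
variable {n : ℕ} (A : Matrix (Fin n) (Fin n) ℝ)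

lemma trace_inv_bound (hPD : A.PosDef) (x : Fin n → ℝ) (hx : x ≠ 0)
    (hAx : A *ᵥ x = x) (htrA : A.trace ≤ (n:ℝ) + 1) :
    ((n:ℝ) - 1)^2 / (n:ℝ) + 1 ≤ A⁻¹.trace := by
  have hherm := hPD.isHermitian
  set μ := hherm.eigenvalues with hμ
  set V : Matrix (Fin n) (Fin n) ℝ := (hherm.eigenvectorUnitary : Matrix (Fin n) (Fin n) ℝ)
    with hV
  have hspec : A = V * Matrix.diagonal μ * star V := by
    have := hherm.spectral_theorem
    rwa [RCLike.ofReal_real_eq_id, Function.id_comp] at this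
  have hVsV : star V * V = 1 := Matrix.mem_unitaryGroup_iff'.mp hherm.eigenvectorUnitary.2
  have hVVs : V * star V = 1 := Matrix.mem_unitaryGroup_iff.mp hherm.eigenvectorUnitary.2
  have hμpos : ∀ k, 0 < μ k := hPD.eigenvalues_pos
  -- inverse formula
  set W : Matrix (Fin n) (Fin n) ℝ := V * Matrix.diagonal (fun k => (μ k)⁻¹) * star V with hW
  have hAW : A * W = 1 := by
    rw [hspec, hW]
    calc V * Matrix.diagonal μ * star V * (V * Matrix.diagonal (fun k => (μ k)⁻¹) * star V)
        = V * Matrix.diagonal μ * (star V * V) * Matrix.diagonal (fun k => (μ k)⁻¹) * star V := by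
          simp only [Matrix.mul_assoc]
      _ = V * (Matrix.diagonal μ * Matrix.diagonal (fun k => (μ k)⁻¹)) * star V := by
          rw [hVsV]; simp only [Matrix.mul_one, Matrix.mul_assoc]
      _ = 1 := by
          rw [Matrix.diagonal_mul_diagonal]
          have : (fun k => μ k * (μ k)⁻¹) = fun _ => (1:ℝ) := by
            funext k; exact mul_inv_cancel₀ (hμpos k).ne'
          rw [this, Matrix.diagonal_one, Matrix.mul_one, hVVs]
  have hinv : A⁻¹ = W := Matrix.inv_eq_right_inv hAW
  have htrW : A⁻¹.trace = ∑ k, (μ k)⁻¹ := by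
    rw [hinv, hW, Matrix.trace_mul_cycle, hVsV, Matrix.one_mul, Matrix.trace_diagonal]
  have htrA' : A.trace = ∑ k, μ k := by
    rw [hspec, Matrix.trace_mul_cycle, hVsV, Matrix.one_mul, Matrix.trace_diagonal]
  -- eigenvalue 1 exists
  obtain ⟨k0, hk0⟩ : ∃ k0, μ k0 = 1 := by
    set y := star V *ᵥ x with hy
    have hDy : Matrix.diagonal μ *ᵥ y = y := by
      have h1 : star V * A = Matrix.diagonal μ * star V := by
        rw [hspec]
        calc star V * (V * Matrix.diagonal μ * star V)
            = (star V * V) * (Matrix.diagonal μ * star V) := by simp only [Matrix.mul_assoc]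
          _ = Matrix.diagonal μ * star V := by rw [hVsV, Matrix.one_mul]
      calc Matrix.diagonal μ *ᵥ y = (Matrix.diagonal μ * star V) *ᵥ x := by
            rw [hy, Matrix.mulVec_mulVec]
        _ = (star V * A) *ᵥ x := by rw [h1]
        _ = star V *ᵥ (A *ᵥ x) := by rw [Matrix.mulVec_mulVec]
        _ = y := by rw [hAx, hy]
    have hyne : y ≠ 0 := by
      intro h0
      apply hx
      have : x = V *ᵥ y := by
        rw [hy, Matrix.mulVec_mulVec, hVVs, Matrix.one_mulVec]
      rw [this, h0, Matrix.mulVec_zero]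
    obtain ⟨k0, hk0⟩ := Function.ne_iff.1 hyne
    refine ⟨k0, ?_⟩
    have := congrFun hDy k0
    rw [Matrix.mulVec_diagonal] at this
    have h2 : (μ k0 - 1) * y k0 = 0 := by rw [sub_mul, this]; ring
    have := (mul_eq_zero.1 h2).resolve_right hk0
    linarith [sub_eq_zero.1 this]
  -- Cauchy-Schwarz on the other eigenvalues
  set s := Finset.univ.erase k0 with hs
  have hn1 : 1 ≤ n := k0.pos
  have hcard : (s.card : ℝ) = (n:ℝ) - 1 := by
    rw [hs, Finset.card_erase_of_mem (Finset.mem_univ k0), Finset.card_univ, Fintype.card_fin,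
      Nat.cast_sub hn1, Nat.cast_one]
  have hCS : ((n:ℝ) - 1)^2 ≤ (∑ k ∈ s, μ k) * (∑ k ∈ s, (μ k)⁻¹) := by
    have := Finset.sum_sq_le_sum_mul_sum_of_sq_eq_mul s (r := fun _ => (1:ℝ))
      (f := fun k => μ k) (g := fun k => (μ k)⁻¹)
      (fun k _ => (hμpos k).le) (fun k _ => (inv_nonneg.2 (hμpos k).le))
      (fun k _ => by rw [one_pow, mul_inv_cancel₀ (hμpos k).ne'])
    rwa [Finset.sum_const, nsmul_eq_mul, mul_one, hcard] at this
  have hsumS : ∑ k ∈ s, μ k ≤ (n:ℝ) := by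
    have h1 : ∑ k ∈ s, μ k = (∑ k, μ k) - μ k0 := Finset.sum_erase_eq_sub (Finset.mem_univ k0)
    rw [h1, ← htrA', hk0]; linarith
  have hSinv_nn : 0 ≤ ∑ k ∈ s, (μ k)⁻¹ :=
    Finset.sum_nonneg fun k _ => inv_nonneg.2 (hμpos k).le
  have hCS2 : ((n:ℝ) - 1)^2 ≤ (n:ℝ) * (∑ k ∈ s, (μ k)⁻¹) :=
    hCS.trans (mul_le_mul_of_nonneg_right hsumS hSinv_nn)
  have hnpos : 0 < (n:ℝ) := by
    exact_mod_cast hn1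
  rw [htrW, ← Finset.add_sum_erase _ _ (Finset.mem_univ k0), hk0, inv_one, ← hs]
  rw [div_add' _ _ _ hnpos.ne', div_le_iff₀ hnpos]
  nlinarith [hCS2]
end spectral

theorem total_mfpt_reversible_lower_bound {N : ℕ} (hN : 3 ≤ N)
    (P M : Matrix (Fin N) (Fin N) ℝ)
    (hP : IsRowStochastic P) (hsym : P = Pᵀ) (hirr : IsIrreducibleMC P)
    (hM : IsMFPT P M) :
    (N : ℝ) ^ 3 - 2 * (N : ℝ) ^ 2 + (N : ℝ) ≤
      ∑ i, ∑ j ∈ Finset.univ.filter (fun j => j ≠ i), M i j := by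
  obtain ⟨hP0, hrow⟩ := hP
  have hN0 : 0 < N := by omega
  have hNR : (0:ℝ) < (N:ℝ) := by exact_mod_cast hN0
  have hcol : ∀ j, ∑ i, P i j = 1 := by
    intro j
    have : ∀ i, P i j = P j i := fun i => by conv_lhs => rw [hsym, Matrix.transpose_apply]
    rw [Finset.sum_congr rfl fun i _ => this i]
    exact hrow j
  have hPD := Amat_posDef P hN0 hP0 hrow hcol hsym hirr
  have hdet : IsUnit (Amat P).det := hPD.det_pos.ne'.isUnit
  have hT := total_sum_eq P M hN0 hrow hcol hdet hM
  -- the all-ones vector is fixed by Amat P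
  have hAx : Amat P *ᵥ (fun _ => (1:ℝ)) = fun _ => (1:ℝ) := by
    funext i
    simp only [Amat, Jmat, Matrix.mulVec, dotProduct, Matrix.add_apply,
      Matrix.sub_apply, Matrix.smul_apply, Matrix.one_apply, Matrix.of_apply,
      smul_eq_mul, mul_one]
    rw [Finset.sum_add_distrib, Finset.sum_sub_distrib]
    simp [hrow i, Finset.card_univ, mul_comm, hNR.ne']
  have hx : (fun _ : Fin N => (1:ℝ)) ≠ 0 := by
    intro h
    have := congrFun h ⟨0, hN0⟩
    simp at this
  have htrA : (Amat P).trace ≤ (N:ℝ) + 1 := by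
    have hdiagsum : (Amat P).trace = (N:ℝ) - (∑ i, P i i) + 1 := by
      rw [Matrix.trace]
      simp only [Matrix.diag_apply, Amat, Jmat, Matrix.add_apply, Matrix.sub_apply,
        Matrix.smul_apply, Matrix.one_apply_eq, Matrix.of_apply, smul_eq_mul, mul_one]
      rw [Finset.sum_add_distrib, Finset.sum_sub_distrib]
      simp [Finset.card_univ, mul_comm, hNR.ne']
    have hPnn : 0 ≤ ∑ i, P i i := Finset.sum_nonneg fun i _ => hP0 i i
    linarith [hdiagsum]
  have hZtr := trace_inv_bound (Amat P) hPD _ hx hAx htrA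
  -- convert the goal
  have hgoal : ∑ i, ∑ j ∈ Finset.univ.filter (fun j => j ≠ i), M i j
      = (∑ i, ∑ j, M i j) - (N:ℝ)^2 := by
    have : ∀ i, ∑ j ∈ Finset.univ.filter (fun j => j ≠ i), M i j
        = (∑ j, M i j) - (N:ℝ) := by
      intro i
      rw [Finset.filter_ne', Finset.sum_erase_eq_sub (Finset.mem_univ i),
        Mdiag P M hcol hM i]
    rw [Finset.sum_congr rfl fun i _ => this i, Finset.sum_sub_distrib]
    simp [Finset.card_univ]
    ring
  rw [hgoal, hT]
  have h1 : (N:ℝ)^2 * (((N:ℝ) - 1)^2 / (N:ℝ) + 1) ≤ (N:ℝ)^2 * ((Amat P)⁻¹).trace := by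
    gcongr
  have h2 : (N:ℝ)^2 * (((N:ℝ) - 1)^2 / (N:ℝ) + 1) = (N:ℝ)^3 - 2*(N:ℝ)^2 + (N:ℝ) + (N:ℝ)^2 := by
    field_simp
    ring
  linarith
end

section
/- Price of reversibility: let N ≥ 3. Let M̂ be a mean first passage time matrix of the N×N cyclic permutation matrix (P̂_{ij} = 1 if j ≡ i+1 mod N, else 0), and let P be any symmetric irreducible row-stochastic N×N matrix with mean first passage time matrix M. Then Σ_{i≠j} M̂_{ij} < Σ_{i≠j} M_{ij}; i.e., the (non-reversible) Hamiltonian-cycle chain has strictly smaller total mean first passage times than every reversible chain, since (N³ − N²)/2 < N³ − 2N² + N for N ≥ 3. -/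
open Matrix Finset

lemma mhat_step {N : ℕ} [NeZero N] (hN : 3 ≤ N)
    (Phat Mhat : Matrix (Fin N) (Fin N) ℝ)
    (hPhat : ∀ i j : Fin N, Phat i j = if (j : ℕ) = ((i : ℕ) + 1) % N then 1 else 0)
    (hMhat : IsMFPT Phat Mhat) (i j : Fin N) :
    Mhat i j = 1 + (if i + 1 = j then 0 else Mhat (i + 1) j) := by
  have h1 : ((1 : Fin N) : ℕ) = 1 := by
    rw [Fin.val_one']; exact Nat.mod_eq_of_lt (by omega)
  have hP' : ∀ k : Fin N, Phat i k = if k = i + 1 then 1 else 0 := by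
    intro k
    rw [hPhat]
    congr 1
    rw [Fin.ext_iff, Fin.add_def, h1]
  rw [hMhat i j]
  congr 1
  rw [Finset.sum_congr rfl (fun k _ => by rw [hP', ite_mul, one_mul, zero_mul])]
  rw [Finset.sum_ite_eq' (univ.filter (fun k => k ≠ j)) (i+1) (fun k => Mhat k j)]
  simp only [Finset.mem_filter, Finset.mem_univ, true_and]
  split_ifs with h h2 h3 <;> simp_all

open Fin.NatCast Fin.CommRing in
lemma mhat_val {N : ℕ} [NeZero N] (hN : 3 ≤ N)
    (Phat Mhat : Matrix (Fin N) (Fin N) ℝ)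
    (hPhat : ∀ i j : Fin N, Phat i j = if (j : ℕ) = ((i : ℕ) + 1) % N then 1 else 0)
    (hMhat : IsMFPT Phat Mhat) :
    ∀ d : ℕ, 1 ≤ d → d < N → ∀ i : Fin N, Mhat i (i + (d : Fin N)) = d := by
  intro d
  induction d with
  | zero => omega
  | succ d ih =>
    intro h1 h2 i
    rcases Nat.lt_or_ge d 1 with h | h
    · have hd0 : d = 0 := by omega
      subst hd0
      rw [mhat_step hN Phat Mhat hPhat hMhat]
      norm_num
    · rw [mhat_step hN Phat Mhat hPhat hMhat]
      have hval : ((↑(d+1) : Fin N) : ℕ) = d + 1 := by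
        rw [Fin.val_natCast]; exact Nat.mod_eq_of_lt h2
      have h1v : ((1 : Fin N) : ℕ) = 1 := by
        rw [Fin.val_one']; exact Nat.mod_eq_of_lt (by omega)
      have hne : ¬ (i + 1 = i + (↑(d+1) : Fin N)) := by
        intro hcon
        have h2' := add_left_cancel hcon
        have : ((1 : Fin N) : ℕ) = ((↑(d+1) : Fin N) : ℕ) := by rw [h2']
        rw [h1v, hval] at this
        omega
      rw [if_neg hne]
      have hsplit : i + (↑(d+1) : Fin N) = (i + 1) + (↑d : Fin N) := by
        push_cast; ring
      rw [hsplit, ih (by omega) (by omega)]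
      push_cast; ring

open Fin.NatCast in
lemma mhat_entry {N : ℕ} [NeZero N] (hN : 3 ≤ N)
    (Phat Mhat : Matrix (Fin N) (Fin N) ℝ)
    (hPhat : ∀ i j : Fin N, Phat i j = if (j : ℕ) = ((i : ℕ) + 1) % N then 1 else 0)
    (hMhat : IsMFPT Phat Mhat) (i j : Fin N) (hij : i ≠ j) :
    Mhat i j = (((j - i : Fin N)).val : ℝ) := by
  have hd : 1 ≤ ((j - i : Fin N)).val := by
    rcases Nat.eq_zero_or_pos ((j - i : Fin N)).val with h | h
    · exfalso
      apply hij
      have h0 : (j - i : Fin N) = 0 := Fin.ext h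
      exact (sub_eq_zero.mp h0).symm
    · exact h
  have hkey := mhat_val hN Phat Mhat hPhat hMhat ((j - i : Fin N)).val hd (Fin.is_lt _) i
  rw [Fin.cast_val_eq_self] at hkey
  have : i + (j - i) = j := by abel
  rwa [this] at hkey

lemma mhat_total {N : ℕ} [NeZero N] (hN : 3 ≤ N)
    (Phat Mhat : Matrix (Fin N) (Fin N) ℝ)
    (hPhat : ∀ i j : Fin N, Phat i j = if (j : ℕ) = ((i : ℕ) + 1) % N then 1 else 0)
    (hMhat : IsMFPT Phat Mhat) :
    ∑ i, ∑ j ∈ Finset.univ.filter (fun j => j ≠ i), Mhat i j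
      = (N : ℝ)^2 * ((N : ℝ) - 1) / 2 := by
  have hgauss : ∑ k : Fin N, ((k : ℕ) : ℝ) = (N : ℝ) * ((N : ℝ) - 1) / 2 := by
    rw [Fin.sum_univ_eq_sum_range (fun k => ((k : ℕ) : ℝ)) N]
    have h2 := Finset.sum_range_id_mul_two N
    have h3 : ((∑ i ∈ Finset.range N, i : ℕ) : ℝ) * 2 = (N : ℝ) * ((N : ℝ) - 1) := by
      rw [← Nat.cast_ofNat, ← Nat.cast_mul, h2]
      have : ((N - 1 : ℕ) : ℝ) = (N : ℝ) - 1 := by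
        rw [Nat.cast_sub (by omega)]; norm_num
      rw [Nat.cast_mul, this]
    rw [Nat.cast_sum] at h3
    linarith
  have hrow : ∀ i : Fin N, ∑ j ∈ Finset.univ.filter (fun j => j ≠ i), Mhat i j
      = (N : ℝ) * ((N : ℝ) - 1) / 2 := by
    intro i
    rw [Finset.filter_ne']
    have hcongr : ∑ j ∈ Finset.univ.erase i, Mhat i j
        = ∑ j ∈ Finset.univ.erase i, (((j - i : Fin N)).val : ℝ) := by
      refine Finset.sum_congr rfl (fun j hj => ?_)
      exact mhat_entry hN Phat Mhat hPhat hMhat i j (Ne.symm (Finset.mem_erase.mp hj).1)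
    rw [hcongr, Finset.sum_erase_eq_sub (Finset.mem_univ i)]
    have h0 : (((i - i : Fin N)).val : ℝ) = 0 := by simp
    rw [h0, sub_zero]
    have heq := Fintype.sum_equiv (Equiv.subRight i)
      (fun j => (((j - i : Fin N)).val : ℝ)) (fun k => ((k : ℕ) : ℝ)) (fun j => rfl)
    rw [heq]
    exact hgauss
  rw [Finset.sum_congr rfl (fun i _ => hrow i), Finset.sum_const, Finset.card_univ,
    Fintype.card_fin, nsmul_eq_mul]
  ring

lemma mfpt_diag {N : ℕ} (hN : 3 ≤ N) (P M : Matrix (Fin N) (Fin N) ℝ)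
    (hP : IsRowStochastic P) (hsym : P = Pᵀ) (hM : IsMFPT P M) (j : Fin N) :
    M j j = N := by
  have hPsym : ∀ i k, P i k = P k i := by
    intro i k
    conv_lhs => rw [hsym, Matrix.transpose_apply]
  have hcol : ∀ k : Fin N, ∑ i, P i k = 1 := by
    intro k
    rw [Finset.sum_congr rfl (fun i _ => hPsym i k)]
    exact hP.2 k
  have key : ∑ i ∈ Finset.univ.erase j, M i j
      = ∑ i ∈ Finset.univ.erase j, (1 + ∑ k ∈ Finset.univ.erase j, P i k * M k j) := by
    refine Finset.sum_congr rfl (fun i _ => ?_)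
    rw [hM i j, Finset.filter_ne']
  rw [Finset.sum_add_distrib, Finset.sum_const, Finset.card_erase_of_mem (Finset.mem_univ j),
    Finset.card_univ, Fintype.card_fin, Finset.sum_comm] at key
  have hinner : ∀ k ∈ Finset.univ.erase j, ∑ i ∈ Finset.univ.erase j, P i k * M k j
      = (1 - P j k) * M k j := by
    intro k _
    rw [← Finset.sum_mul, Finset.sum_erase_eq_sub (Finset.mem_univ j), hcol k]
  rw [Finset.sum_congr rfl hinner] at key
  have hsplit : ∑ k ∈ Finset.univ.erase j, (1 - P j k) * M k j
      = ∑ k ∈ Finset.univ.erase j, M k j - ∑ k ∈ Finset.univ.erase j, P j k * M k j := by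
    rw [← Finset.sum_sub_distrib]
    exact Finset.sum_congr rfl (fun k _ => by ring)
  have hret : ∑ k ∈ Finset.univ.erase j, P j k * M k j = M j j - 1 := by
    have := hM j j
    rw [Finset.filter_ne'] at this
    linarith
  rw [hsplit, hret] at key
  have hcard : ((N - 1 : ℕ) : ℝ) = (N : ℝ) - 1 := by
    rw [Nat.cast_sub (by omega)]; norm_num
  rw [nsmul_eq_mul, hcard, mul_one] at key
  linarith

lemma key_ineq {N : ℕ} (hN : 3 ≤ N) (P M : Matrix (Fin N) (Fin N) ℝ)
    (hP : IsRowStochastic P) (hsym : P = Pᵀ) (hM : IsMFPT P M) (j : Fin N) (α β : ℝ) :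
    2*(α+β) - α^2 * (1 - P j j + 1/(N:ℝ)) - 2*α*β - β^2*(N:ℝ)
      ≤ (∑ i, M i j)/(N:ℝ)^2 := by
  have hn : (0:ℝ) < (N:ℝ) := by
    have : (0:ℕ) < N := by omega
    exact_mod_cast this
  have hn0 : (N:ℝ) ≠ 0 := ne_of_gt hn
  have hPsym : ∀ i k, P i k = P k i := by
    intro i k
    conv_lhs => rw [hsym, Matrix.transpose_apply]
  have hcolP : ∀ k : Fin N, ∑ i, P i k = 1 := by
    intro k
    rw [Finset.sum_congr rfl (fun i _ => hPsym i k)]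
    exact hP.2 k
  have hMdiag : ∀ i : Fin N, M i i = (N:ℝ) := mfpt_diag hN P M hP hsym hM
  set n : ℝ := (N:ℝ) with hndef
  set c : ℝ := ∑ i, M i j with hc
  set Q : Fin N → Fin N → ℝ := fun i k => (if i = k then (1:ℝ) else 0) - P i k + 1/n
    with hQ
  set v : Fin N → ℝ := fun i => c/n^2 + (if i = j then (1:ℝ) else 0) - M i j/n with hv
  set x : Fin N → ℝ := fun i => α * (if i = j then (1:ℝ) else 0) + β with hx
  -- row sums of Q are 1
  have hQrow : ∀ i : Fin N, ∑ k, Q i k = 1 := by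
    intro i
    simp only [hQ]
    rw [Finset.sum_add_distrib, Finset.sum_sub_distrib, hP.2 i,
      Finset.sum_ite_eq Finset.univ i (fun _ => (1:ℝ)), Finset.sum_const,
      Finset.card_univ, Fintype.card_fin, nsmul_eq_mul]
    simp only [Finset.mem_univ, if_true]
    field_simp
    rw [hndef]; ring
  have hQsym : ∀ i k, Q i k = Q k i := by
    intro i k
    simp only [hQ]
    rw [hPsym i k]
    congr 1
    congr 1
    by_cases h : i = k
    · simp [h]
    · simp [h, Ne.symm h]
  have hQcol : ∀ k : Fin N, ∑ i, Q i k = 1 := by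
    intro k
    rw [Finset.sum_congr rfl (fun i _ => hQsym i k)]
    exact hQrow k
  -- P-row times M-column
  have hPM : ∀ i : Fin N, ∑ k, P i k * M k j = M i j - 1 + P i j * n := by
    intro i
    have h1 := hM i j
    rw [Finset.filter_ne'] at h1
    have h2 : ∑ k ∈ Finset.univ.erase j, P i k * M k j
        = ∑ k, P i k * M k j - P i j * M j j :=
      Finset.sum_erase_eq_sub (Finset.mem_univ j)
    rw [hMdiag j] at h2
    rw [h2] at h1
    linarith
  -- Q-row times M-column
  have hQM : ∀ i : Fin N, ∑ k, Q i k * M k j = 1 - n * P i j + c/n := by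
    intro i
    have expand : ∀ k : Fin N, Q i k * M k j
        = (if i = k then M k j else 0) - P i k * M k j + (1/n) * M k j := by
      intro k
      simp only [hQ]
      by_cases h : i = k <;> simp [h] <;> ring
    rw [Finset.sum_congr rfl (fun k _ => expand k), Finset.sum_add_distrib,
      Finset.sum_sub_distrib, Finset.sum_ite_eq Finset.univ i (fun k => M k j),
      hPM i, ← Finset.mul_sum]
    have hck : ∑ k, M k j = c := rfl
    rw [hck]
    simp only [Finset.mem_univ, if_true]
    ring
  -- Q v = e_j
  have hQv : ∀ i : Fin N, ∑ k, Q i k * v k = if i = j then 1 else 0 := by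
    intro i
    have expand : ∀ k : Fin N, Q i k * v k
        = (c/n^2) * Q i k + (if k = j then Q i k else 0) - (1/n) * (Q i k * M k j) := by
      intro k
      simp only [hv]
      by_cases h : k = j <;> simp [h] <;> ring
    rw [Finset.sum_congr rfl (fun k _ => expand k), Finset.sum_sub_distrib,
      Finset.sum_add_distrib, ← Finset.mul_sum, hQrow i, ← Finset.mul_sum, hQM i,
      Finset.sum_ite_eq' Finset.univ j (fun k => Q i k)]
    simp only [Finset.mem_univ, if_true]
    simp only [hQ]
    by_cases h : i = j <;> simp [h] <;> field_simp <;> ring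
  -- positive semidefiniteness of Q
  have hPSD : ∀ w : Fin N → ℝ, 0 ≤ ∑ i, ∑ k, w i * Q i k * w k := by
    intro w
    have expand : ∀ i k : Fin N, w i * Q i k * w k
        = (if i = k then w i * w k else 0) - P i k * (w i * w k)
          + (1/n) * (w i * w k) := by
      intro i k
      simp only [hQ]
      by_cases h : i = k <;> simp [h] <;> ring
    rw [Finset.sum_congr rfl (fun i _ =>
      Finset.sum_congr rfl (fun k _ => expand i k))]
    simp only [Finset.sum_add_distrib, Finset.sum_sub_distrib]
    have T1 : ∑ i : Fin N, ∑ k : Fin N, (if i = k then w i * w k else 0)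
        = ∑ i : Fin N, w i * w i := by
      refine Finset.sum_congr rfl (fun i _ => ?_)
      rw [Finset.sum_ite_eq Finset.univ i (fun k => w i * w k)]
      simp
    have T3 : ∑ i : Fin N, ∑ k : Fin N, (1/n) * (w i * w k)
        = (1/n) * ((∑ i, w i) * (∑ i, w i)) := by
      have e1 : ∀ i : Fin N, ∑ k : Fin N, (1/n) * (w i * w k)
          = (1/n) * w i * (∑ k, w k) := by
        intro i
        rw [Finset.mul_sum]
        exact Finset.sum_congr rfl (fun k _ => by ring)
      rw [Finset.sum_congr rfl (fun i _ => e1 i), ← Finset.sum_mul, ← Finset.mul_sum]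
      ring
    have T2 : ∑ i : Fin N, ∑ k : Fin N, P i k * (w i * w k) ≤ ∑ i : Fin N, w i * w i := by
      have hb : ∀ i k : Fin N, P i k * (w i * w k)
          ≤ P i k * ((w i * w i + w k * w k)/2) := by
        intro i k
        refine mul_le_mul_of_nonneg_left ?_ (hP.1 i k)
        nlinarith [sq_nonneg (w i - w k)]
      have hstep : ∑ i : Fin N, ∑ k : Fin N, P i k * (w i * w k)
          ≤ ∑ i : Fin N, ∑ k : Fin N, P i k * ((w i * w i + w k * w k)/2) :=
        Finset.sum_le_sum (fun i _ => Finset.sum_le_sum (fun k _ => hb i k))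
      have heval : ∑ i : Fin N, ∑ k : Fin N, P i k * ((w i * w i + w k * w k)/2)
          = ∑ i : Fin N, w i * w i := by
        have e1 : ∀ i k : Fin N, P i k * ((w i * w i + w k * w k)/2)
            = P i k * (w i * w i)/2 + P i k * (w k * w k)/2 := by intros; ring
        rw [Finset.sum_congr rfl (fun i _ => Finset.sum_congr rfl (fun k _ => e1 i k))]
        simp only [Finset.sum_add_distrib]
        have eA : ∑ i : Fin N, ∑ k : Fin N, P i k * (w i * w i)/2
            = ∑ i : Fin N, w i * w i / 2 := by
          refine Finset.sum_congr rfl (fun i _ => ?_)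
          have e2 : ∑ k : Fin N, P i k * (w i * w i)/2
              = (∑ k : Fin N, P i k) * (w i * w i / 2) := by
            rw [Finset.sum_mul]
            exact Finset.sum_congr rfl (fun k _ => by ring)
          rw [e2, hP.2 i, one_mul]
        have eB : ∑ i : Fin N, ∑ k : Fin N, P i k * (w k * w k)/2
            = ∑ i : Fin N, w i * w i / 2 := by
          rw [Finset.sum_comm]
          refine Finset.sum_congr rfl (fun k _ => ?_)
          have e2 : ∑ i : Fin N, P i k * (w k * w k)/2
              = (∑ i : Fin N, P i k) * (w k * w k / 2) := by
            rw [Finset.sum_mul]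
            exact Finset.sum_congr rfl (fun i _ => by ring)
          rw [e2, hcolP k, one_mul]
        rw [eA, eB, ← Finset.sum_add_distrib]
        exact Finset.sum_congr rfl (fun i _ => by ring)
      linarith
    have hsq : 0 ≤ (1/n) * ((∑ i, w i) * (∑ i, w i)) :=
      mul_nonneg (div_nonneg zero_le_one (le_of_lt hn)) (mul_self_nonneg _)
    linarith [T1, T2, T3, hsq]
  -- test vector computations
  have hxj : x j = α + β := by simp [hx]
  have hvj : v j = c/n^2 := by
    simp only [hv, if_pos rfl]
    rw [hMdiag j]
    field_simp
    simp
  have hxsum : ∑ i, x i = α + β * n := by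
    simp only [hx]
    rw [Finset.sum_add_distrib, Finset.sum_const, Finset.card_univ, Fintype.card_fin,
      nsmul_eq_mul]
    have e : ∀ i : Fin N, α * (if i = j then (1:ℝ) else 0) = if i = j then α else 0 := by
      intro i; by_cases h : i = j <;> simp [h]
    rw [Finset.sum_congr rfl (fun i _ => e i),
      Finset.sum_ite_eq' Finset.univ j (fun _ => α), ← hndef]
    simp only [Finset.mem_univ, if_true]
    ring
  have hQx : ∀ i : Fin N, ∑ k, Q i k * x k = α * Q i j + β := by
    intro i
    have e : ∀ k : Fin N, Q i k * x k = (if k = j then α * Q i k else 0) + β * Q i k := by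
      intro k; simp only [hx]; by_cases h : k = j <;> simp [h] <;> ring
    rw [Finset.sum_congr rfl (fun k _ => e k), Finset.sum_add_distrib,
      Finset.sum_ite_eq' Finset.univ j (fun k => α * Q i k), ← Finset.mul_sum, hQrow i]
    simp only [Finset.mem_univ, if_true]
    ring
  have hxQcol : ∑ i, x i * Q i j = α * Q j j + β := by
    have e : ∀ i : Fin N, x i * Q i j = (if i = j then α * Q i j else 0) + β * Q i j := by
      intro i; simp only [hx]; by_cases h : i = j <;> simp [h] <;> ring
    rw [Finset.sum_congr rfl (fun i _ => e i), Finset.sum_add_distrib,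
      Finset.sum_ite_eq' Finset.univ j (fun i => α * Q i j), ← Finset.mul_sum, hQcol j]
    simp only [Finset.mem_univ, if_true]
    ring
  have hBxx : ∑ i, ∑ k, x i * Q i k * x k = α^2 * Q j j + 2*α*β + β^2*n := by
    have e : ∀ i : Fin N, ∑ k, x i * Q i k * x k = x i * (α * Q i j + β) := by
      intro i
      rw [← hQx i, Finset.mul_sum]
      exact Finset.sum_congr rfl (fun k _ => by ring)
    rw [Finset.sum_congr rfl (fun i _ => e i)]
    have e2 : ∀ i : Fin N, x i * (α * Q i j + β) = α * (x i * Q i j) + β * x i := by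
      intro i; ring
    rw [Finset.sum_congr rfl (fun i _ => e2 i), Finset.sum_add_distrib, ← Finset.mul_sum,
      ← Finset.mul_sum, hxQcol, hxsum]
    ring
  have hBxv : ∑ i, ∑ k, x i * Q i k * v k = x j := by
    have e : ∀ i : Fin N, ∑ k, x i * Q i k * v k = x i * (if i = j then 1 else 0) := by
      intro i
      rw [← hQv i, Finset.mul_sum]
      exact Finset.sum_congr rfl (fun k _ => by ring)
    rw [Finset.sum_congr rfl (fun i _ => e i)]
    have e2 : ∀ i : Fin N, x i * (if i = j then (1:ℝ) else 0) = if i = j then x i else 0 := by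
      intro i; by_cases h : i = j <;> simp [h]
    rw [Finset.sum_congr rfl (fun i _ => e2 i), Finset.sum_ite_eq' Finset.univ j x]
    simp
  have hBvv : ∑ i, ∑ k, v i * Q i k * v k = v j := by
    have e : ∀ i : Fin N, ∑ k, v i * Q i k * v k = v i * (if i = j then 1 else 0) := by
      intro i
      rw [← hQv i, Finset.mul_sum]
      exact Finset.sum_congr rfl (fun k _ => by ring)
    rw [Finset.sum_congr rfl (fun i _ => e i)]
    have e2 : ∀ i : Fin N, v i * (if i = j then (1:ℝ) else 0) = if i = j then v i else 0 := by
      intro i; by_cases h : i = j <;> simp [h]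
    rw [Finset.sum_congr rfl (fun i _ => e2 i), Finset.sum_ite_eq' Finset.univ j v]
    simp
  have hBvx : ∑ i, ∑ k, v i * Q i k * x k = x j := by
    rw [Finset.sum_comm]
    have e : ∀ k : Fin N, ∑ i, v i * Q i k * x k = (if k = j then 1 else 0) * x k := by
      intro k
      have e1 : ∀ i : Fin N, v i * Q i k * x k = (Q k i * v i) * x k := by
        intro i; rw [← hQsym i k]; ring
      rw [Finset.sum_congr rfl (fun i _ => e1 i), ← Finset.sum_mul]
      congr 1
      exact hQv k
    rw [Finset.sum_congr rfl (fun k _ => e k)]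
    have e2 : ∀ k : Fin N, (if k = j then (1:ℝ) else 0) * x k = if k = j then x k else 0 := by
      intro k; by_cases h : k = j <;> simp [h]
    rw [Finset.sum_congr rfl (fun k _ => e2 k), Finset.sum_ite_eq' Finset.univ j x]
    simp
  have hmain := hPSD (fun i => x i - v i)
  have hexp : ∑ i, ∑ k, (x i - v i) * Q i k * (x k - v k)
      = (∑ i, ∑ k, x i * Q i k * x k) - (∑ i, ∑ k, x i * Q i k * v k)
        - ((∑ i, ∑ k, v i * Q i k * x k) - (∑ i, ∑ k, v i * Q i k * v k)) := by
    have e : ∀ i k : Fin N, (x i - v i) * Q i k * (x k - v k)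
        = x i * Q i k * x k - x i * Q i k * v k
          - (v i * Q i k * x k - v i * Q i k * v k) := by
      intro i k; ring
    rw [Finset.sum_congr rfl (fun i _ => Finset.sum_congr rfl (fun k _ => e i k))]
    simp only [Finset.sum_sub_distrib]
  rw [hexp, hBxx, hBxv, hBvx, hBvv, hvj, hxj] at hmain
  have hQjj : Q j j = 1 - P j j + 1/n := by simp [hQ]
  rw [hQjj] at hmain
  linarith

theorem price_of_reversibility {N : ℕ} (hN : 3 ≤ N)
    (Phat Mhat : Matrix (Fin N) (Fin N) ℝ)
    (hPhat : ∀ i j : Fin N, Phat i j = if (j : ℕ) = ((i : ℕ) + 1) % N then 1 else 0)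
    (hMhat : IsMFPT Phat Mhat)
    (P M : Matrix (Fin N) (Fin N) ℝ)
    (hP : IsRowStochastic P) (hsym : P = Pᵀ) (hirr : IsIrreducibleMC P)
    (hM : IsMFPT P M) :
    ∑ i, ∑ j ∈ Finset.univ.filter (fun j => j ≠ i), Mhat i j <
      ∑ i, ∑ j ∈ Finset.univ.filter (fun j => j ≠ i), M i j := by
  haveI : NeZero N := ⟨by omega⟩
  have hn : (0:ℝ) < (N:ℝ) := by exact_mod_cast (by omega : 0 < N)
  have hn0 : (N:ℝ) ≠ 0 := ne_of_gt hn
  have hn3 : (3:ℝ) ≤ (N:ℝ) := by exact_mod_cast hN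
  rw [mhat_total hN Phat Mhat hPhat hMhat]
  have hMdiag : ∀ i : Fin N, M i i = (N:ℝ) := mfpt_diag hN P M hP hsym hM
  have hoff : ∑ i, ∑ j ∈ Finset.univ.filter (fun j => j ≠ i), M i j
      = (∑ i, ∑ j, M i j) - (N:ℝ)*(N:ℝ) := by
    have e : ∀ i : Fin N, ∑ j ∈ Finset.univ.filter (fun j => j ≠ i), M i j
        = (∑ j, M i j) - (N:ℝ) := by
      intro i
      rw [Finset.filter_ne', Finset.sum_erase_eq_sub (Finset.mem_univ i), hMdiag i]
    rw [Finset.sum_congr rfl (fun i _ => e i), Finset.sum_sub_distrib,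
      Finset.sum_const, Finset.card_univ, Fintype.card_fin, nsmul_eq_mul]
  rw [hoff]
  set T : ℝ := ∑ i, ∑ j, M i j with hTdef
  set α : ℝ := ((N:ℝ)-1)/(N:ℝ) with ha
  set β : ℝ := 1/(N:ℝ)^2 with hb
  set W : ℝ := 2*(α+β) - α^2 * (1 + 1/(N:ℝ)) - 2*α*β - β^2*(N:ℝ) with hW
  have hsum := Finset.sum_le_sum
    (fun j (_ : j ∈ (Finset.univ : Finset (Fin N))) => key_ineq hN P M hP hsym hM j α β)
  have htr : 0 ≤ ∑ j, P j j := Finset.sum_nonneg (fun j _ => hP.1 j j)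
  have hL : ∑ j : Fin N, (2*(α+β) - α^2 * (1 - P j j + 1/(N:ℝ)) - 2*α*β - β^2*(N:ℝ))
      = (N:ℝ) * W + α^2 * ∑ j, P j j := by
    have e : ∀ j : Fin N, 2*(α+β) - α^2 * (1 - P j j + 1/(N:ℝ)) - 2*α*β - β^2*(N:ℝ)
        = W + α^2 * P j j := by
      intro j; rw [hW]; ring
    rw [Finset.sum_congr rfl (fun j _ => e j), Finset.sum_add_distrib, ← Finset.mul_sum,
      Finset.sum_const, Finset.card_univ, Fintype.card_fin, nsmul_eq_mul]
  have hR : ∑ j : Fin N, (∑ i, M i j)/(N:ℝ)^2 = T/(N:ℝ)^2 := by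
    rw [← Finset.sum_div, hTdef, Finset.sum_comm]
  rw [hL, hR] at hsum
  have hT3 : (N:ℝ)^3 * W = (N:ℝ)^3 - (N:ℝ)^2 + (N:ℝ) := by
    rw [hW, ha, hb]; field_simp; ring
  have h2 : (N:ℝ)*W ≤ T/(N:ℝ)^2 := by
    have := mul_nonneg (sq_nonneg α) htr
    linarith
  have h3 : (N:ℝ)^2 * ((N:ℝ)*W) ≤ (N:ℝ)^2 * (T/(N:ℝ)^2) :=
    mul_le_mul_of_nonneg_left h2 (by positivity)
  have h4 : (N:ℝ)^2 * (T/(N:ℝ)^2) = T := by field_simp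
  have h5 : (N:ℝ)^2*((N:ℝ)*W) = (N:ℝ)^3*W := by ring
  have htot : (N:ℝ)^3 - (N:ℝ)^2 + (N:ℝ) ≤ T := by
    rw [h4, h5, hT3] at h3
    exact h3
  nlinarith [hn3, htot]
end
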